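/- Define w(κ) = ((−4κ−1)/(4√(−κ)))·atanh(√(−2κ/(1−2κ))) − (3/2)·√((1−2κ)/2) for κ < 0. Then w is continuous on (−∞,0), w(κ) → +∞ as κ → −∞, w(κ) → −√2 as κ → 0⁻, and w is strictly decreasing on (−∞,0); hence w has a unique zero κ₀ ∈ (−∞,0). -/

import Mathlib

open Filter

noncomputable def artanh (x : ℝ) : ℝ := (1/2) * Real.log ((1 + x) / (1 - x))

noncomputable def w (κ : ℝ) : ℝ :=
  ((-4*κ - 1) / (4 * Real.sqrt (-κ))) * artanh (Real.sqrt (-2*κ / (1 - 2*κ)))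
    - (3/2) * Real.sqrt ((1 - 2*κ) / 2)

lemma artanh_eq {x : ℝ} (h1 : -1 < x) (h2 : x < 1) :
    artanh x = (1/2) * (Real.log (1 + x) - Real.log (1 - x)) := by
  rw [artanh, Real.log_div (by linarith) (by linarith)]

lemma hasDerivAt_artanh {x : ℝ} (h1 : -1 < x) (h2 : x < 1) :
    HasDerivAt artanh (1 / (1 - x^2)) x := by
  have h1p : (0:ℝ) < 1 + x := by linarith
  have h2p : (0:ℝ) < 1 - x := by linarith
  have key : HasDerivAt (fun y => (1/2) * (Real.log (1 + y) - Real.log (1 - y)))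
      (1 / (1 - x^2)) x := by
    have hl1 : HasDerivAt (fun y : ℝ => Real.log (1 + y)) (1/(1+x)) x := by
      have := (Real.hasDerivAt_log h1p.ne').comp x ((hasDerivAt_id x).const_add 1)
      simpa [Function.comp_def] using this
    have hl2 : HasDerivAt (fun y : ℝ => Real.log (1 - y)) (-(1/(1-x))) x := by
      have := (Real.hasDerivAt_log h2p.ne').comp x ((hasDerivAt_id x).neg.const_add 1)
      simpa [mul_comm, Function.comp_def] using this
    have := ((hl1.sub hl2).const_mul (1/2 : ℝ))
    refine this.congr_deriv ?_
    have hne : (1:ℝ) - x^2 ≠ 0 := by nlinarith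
    field_simp
    ring
  refine key.congr_of_eventuallyEq ?_
  filter_upwards [Ioo_mem_nhds h1 h2] with y hy
  exact artanh_eq hy.1 hy.2

lemma continuousOn_artanh : ContinuousOn artanh (Set.Ioo (-1:ℝ) 1) := by
  intro x hx
  exact ((hasDerivAt_artanh hx.1 hx.2).continuousAt).continuousWithinAt

lemma le_artanh {x : ℝ} (h0 : 0 ≤ x) (h1 : x < 1) : x ≤ artanh x := by
  have mono : MonotoneOn (fun y => artanh y - y) (Set.Ico (0:ℝ) 1) := by
    apply monotoneOn_of_deriv_nonneg (convex_Ico 0 1)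
    · apply ContinuousOn.sub _ continuousOn_id
      exact continuousOn_artanh.mono (fun y hy => ⟨by linarith [hy.1], hy.2⟩)
    · intro y hy
      rw [interior_Ico] at hy
      exact (((hasDerivAt_artanh (by linarith [hy.1]) hy.2).sub (hasDerivAt_id y)).differentiableAt).differentiableWithinAt
    · intro y hy
      rw [interior_Ico] at hy
      have hd := (((hasDerivAt_artanh (by linarith [hy.1]) hy.2).sub (hasDerivAt_id y))).deriv
      simp only [Pi.sub_def, id] at hd
      rw [hd]
      have : y^2 < 1 := by nlinarith [hy.1, hy.2]
      rw [sub_nonneg, le_div_iff₀ (by linarith)]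
      nlinarith
  have := mono (Set.mem_Ico.2 ⟨le_refl 0, one_pos⟩) (Set.mem_Ico.2 ⟨h0, h1⟩) h0
  simp only [artanh, sub_zero, add_zero, Real.log_one, div_one, mul_zero, sub_self] at this
  simp [artanh]
  linarith [this]

section deriv
variable {κ : ℝ} (hκ : κ < 0)

lemma hu (hκ : κ < 0) : (0:ℝ) < 1 - 2*κ := by linarith

lemma hq_pos (hκ : κ < 0) : 0 < -2*κ/(1-2*κ) := div_pos (by linarith) (hu hκ)
lemma hq_lt (hκ : κ < 0) : -2*κ/(1-2*κ) < 1 := by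
  rw [div_lt_one (hu hκ)]; linarith

-- derivative of x(κ) = sqrt(-κ)
lemma hx_deriv (hκ : κ < 0) :
    HasDerivAt (fun k : ℝ => Real.sqrt (-k)) (-(1/(2 * Real.sqrt (-κ)))) κ := by
  have h := (Real.hasDerivAt_sqrt (x := -κ) (by linarith [hκ] : -κ ≠ 0)).comp κ (hasDerivAt_neg κ)
  simpa [mul_comm, Function.comp_def] using h

-- derivative of A(κ) = (-4κ-1)/(4√(-κ))
lemma hA_deriv (hκ : κ < 0) :
    HasDerivAt (fun k : ℝ => (-4*k - 1) / (4 * Real.sqrt (-k)))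
      ((4*κ - 1) / (8 * Real.sqrt (-κ)^3)) κ := by
  have hx : 0 < Real.sqrt (-κ) := Real.sqrt_pos.2 (by linarith)
  have hx2 : Real.sqrt (-κ)^2 = -κ := Real.sq_sqrt (by linarith)
  have hnum : HasDerivAt (fun k : ℝ => -4*k - 1) (-4) κ := by
    simpa using ((hasDerivAt_id κ).const_mul (-4:ℝ)).sub_const 1
  have hden : HasDerivAt (fun k : ℝ => 4 * Real.sqrt (-k)) (4 * -(1/(2 * Real.sqrt (-κ)))) κ :=
    (hx_deriv hκ).const_mul 4
  have h := hnum.div hden (by positivity)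
  refine h.congr_deriv ?_
  set x := Real.sqrt (-κ) with hxdef
  clear_value x
  have hk : κ = -x^2 := by linarith [hx2]
  subst hk
  field_simp
  ring

-- derivative of r(κ) = sqrt(-2κ/(1-2κ))
lemma hr_deriv (hκ : κ < 0) :
    HasDerivAt (fun k : ℝ => Real.sqrt (-2*k/(1-2*k)))
      (-1 / ((1-2*κ)^2 * Real.sqrt (-2*κ/(1-2*κ)))) κ := by
  have hu' := hu hκ
  have hq : HasDerivAt (fun k : ℝ => -2*k/(1-2*k)) (-2/(1-2*κ)^2) κ := by
    have hnum : HasDerivAt (fun k : ℝ => -2*k) (-2) κ := by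
      simpa using (hasDerivAt_id κ).const_mul (-2:ℝ)
    have hden : HasDerivAt (fun k : ℝ => 1-2*k) (-2) κ := by
      simpa using ((hasDerivAt_id κ).const_mul (2:ℝ)).const_sub 1
    have h := hnum.div hden (by linarith)
    refine h.congr_deriv ?_
    field_simp
    ring
  have h := (Real.hasDerivAt_sqrt (ne_of_gt (hq_pos hκ))).comp κ hq
  refine h.congr_deriv ?_
  have hr0 : 0 < Real.sqrt (-2*κ/(1-2*κ)) := Real.sqrt_pos.2 (hq_pos hκ)
  set r := Real.sqrt (-2*κ/(1-2*κ))
  field_simp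
end deriv

section deriv2
variable {κ : ℝ}

lemma hr2' (hκ : κ < 0) : Real.sqrt (-2*κ/(1-2*κ))^2 = -2*κ/(1-2*κ) :=
  Real.sq_sqrt (le_of_lt (hq_pos hκ))

lemma hr_lt_one (hκ : κ < 0) : Real.sqrt (-2*κ/(1-2*κ)) < 1 := by
  have := Real.sqrt_lt_sqrt (le_of_lt (hq_pos hκ)) (hq_lt hκ)
  simpa using this

-- derivative of T(κ) = artanh (r κ)
lemma hT_deriv (hκ : κ < 0) :
    HasDerivAt (fun k : ℝ => artanh (Real.sqrt (-2*k/(1-2*k))))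
      (-1 / ((1-2*κ) * Real.sqrt (-2*κ/(1-2*κ)))) κ := by
  have hr0 : 0 < Real.sqrt (-2*κ/(1-2*κ)) := Real.sqrt_pos.2 (hq_pos hκ)
  have h := (hasDerivAt_artanh (by linarith) (hr_lt_one hκ)).comp κ (hr_deriv hκ)
  refine h.congr_deriv ?_
  have h2 := hr2' hκ
  have hu' := hu hκ
  set r := Real.sqrt (-2*κ/(1-2*κ)) with hrdef
  clear_value r
  have h1r : 1 - r^2 = 1/(1-2*κ) := by
    rw [h2]; field_simp; ring
  rw [h1r]
  field_simp

-- derivative of S(κ) = sqrt((1-2κ)/2)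
lemma hS_deriv (hκ : κ < 0) :
    HasDerivAt (fun k : ℝ => Real.sqrt ((1-2*k)/2))
      (-1 / (2 * Real.sqrt ((1-2*κ)/2))) κ := by
  have hu' := hu hκ
  have hin : HasDerivAt (fun k : ℝ => (1-2*k)/2) (-1) κ := by
    have := (((hasDerivAt_id κ).const_mul (2:ℝ)).const_sub 1).div_const 2
    refine this.congr_deriv ?_
    norm_num
  have h := (Real.hasDerivAt_sqrt (by positivity : (1-2*κ)/2 ≠ 0)).comp κ hin
  refine h.congr_deriv ?_
  set S := Real.sqrt ((1-2*κ)/2)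
  field_simp

-- full derivative of w
lemma hw_deriv (hκ : κ < 0) :
    HasDerivAt w
      ((4*κ - 1) / (8 * Real.sqrt (-κ)^3) * artanh (Real.sqrt (-2*κ/(1-2*κ)))
        + ((-4*κ - 1) / (4 * Real.sqrt (-κ))) * (-1 / ((1-2*κ) * Real.sqrt (-2*κ/(1-2*κ))))
        - (3/2) * (-1 / (2 * Real.sqrt ((1-2*κ)/2)))) κ := by
  have hA := hA_deriv hκ
  have hT := hT_deriv hκ
  have hS := (hS_deriv hκ).const_mul (3/2 : ℝ)
  have := (hA.mul hT).sub hS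
  exact this

end deriv2

lemma hw_deriv_neg {κ : ℝ} (hκ : κ < 0) :
    (4*κ - 1) / (8 * Real.sqrt (-κ)^3) * artanh (Real.sqrt (-2*κ/(1-2*κ)))
        + ((-4*κ - 1) / (4 * Real.sqrt (-κ))) * (-1 / ((1-2*κ) * Real.sqrt (-2*κ/(1-2*κ))))
        - (3/2) * (-1 / (2 * Real.sqrt ((1-2*κ)/2))) < 0 := by
  have hu' := hu hκ
  have hx0 : 0 < Real.sqrt (-κ) := Real.sqrt_pos.2 (by linarith)
  have hx2 : Real.sqrt (-κ)^2 = -κ := Real.sq_sqrt (by linarith)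
  have hr0 : 0 < Real.sqrt (-2*κ/(1-2*κ)) := Real.sqrt_pos.2 (hq_pos hκ)
  have hr2 := hr2' hκ
  have hr1 := hr_lt_one hκ
  have hS0 : 0 < Real.sqrt ((1-2*κ)/2) := Real.sqrt_pos.2 (by positivity)
  have hS2 : Real.sqrt ((1-2*κ)/2)^2 = (1-2*κ)/2 := Real.sq_sqrt (by positivity)
  have hTr : Real.sqrt (-2*κ/(1-2*κ)) ≤ artanh (Real.sqrt (-2*κ/(1-2*κ))) :=
    le_artanh (le_of_lt hr0) hr1
  set x := Real.sqrt (-κ)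
  set r := Real.sqrt (-2*κ/(1-2*κ))
  set S := Real.sqrt ((1-2*κ)/2)
  set T := artanh r
  clear_value x r S T
  -- key relation: r * S = x
  have hrS : r * S = x := by
    have h1 : (r*S)^2 = x^2 := by
      rw [mul_pow, hr2, hx2, hS2]
      field_simp
    rw [← Real.sqrt_sq (by positivity : (0:ℝ) ≤ r*S), ← Real.sqrt_sq (le_of_lt hx0), h1]
  -- step 1: replace T with r
  have hc : (4*κ - 1) / (8 * x^3) ≤ 0 := by
    apply div_nonpos_of_nonpos_of_nonneg (by linarith) (by positivity)
  have step1 : (4*κ - 1) / (8 * x^3) * T ≤ (4*κ - 1) / (8 * x^3) * r :=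
    mul_le_mul_of_nonpos_left hTr hc
  -- step 2: the T→r expression equals -1/(4S)
  have hrval : r = x/S := by
    field_simp
    linarith [hrS]
  have h12 : (1 - 2*κ : ℝ) = 2*S^2 := by linarith [hS2]
  have step2 : (4*κ - 1) / (8 * x^3) * r
        + ((-4*κ - 1) / (4 * x)) * (-1 / ((1-2*κ) * r))
        - (3/2) * (-1 / (2 * S)) = -1/(4*S) := by
    rw [hrval, h12]
    have hk : κ = -x^2 := by linarith [hx2]
    subst hk
    field_simp
    ring
  have step3 : -1/(4*S) < 0 := by
    apply div_neg_of_neg_of_pos <;> [norm_num; positivity]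
  linarith

lemma continuousOn_w : ContinuousOn w (Set.Iio (0:ℝ)) := fun κ hκ =>
  ((hw_deriv hκ).continuousAt).continuousWithinAt

lemma strictAntiOn_w : StrictAntiOn w (Set.Iio (0:ℝ)) := by
  apply strictAntiOn_of_deriv_neg (convex_Iio 0) continuousOn_w
  intro κ hκ
  rw [interior_Iio] at hκ
  rw [(hw_deriv hκ).deriv]
  exact hw_deriv_neg hκ

lemma artanh_zero : artanh 0 = 0 := by simp [artanh]

lemma tendsto_artanh_div : Tendsto (fun y => artanh y / y) (nhdsWithin 0 {(0:ℝ)}ᶜ) (nhds 1) := by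
  have h := (hasDerivAt_artanh (by norm_num) (by norm_num) : HasDerivAt artanh (1/(1-(0:ℝ)^2)) 0)
  rw [hasDerivAt_iff_tendsto_slope] at h
  norm_num at h
  refine h.congr ?_
  intro y
  rw [slope_def_field, artanh_zero]
  simp

lemma tendsto_r_zero :
    Tendsto (fun κ : ℝ => Real.sqrt (-2*κ/(1-2*κ))) (nhdsWithin 0 (Set.Iio (0:ℝ)))
      (nhdsWithin 0 {(0:ℝ)}ᶜ) := by
  rw [tendsto_nhdsWithin_iff]
  constructor
  · have hc : ContinuousAt (fun κ : ℝ => Real.sqrt (-2*κ/(1-2*κ))) 0 := by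
      apply Real.continuous_sqrt.continuousAt.comp
      apply ContinuousAt.div (by fun_prop) (by fun_prop) (by norm_num)
    have h0 : Real.sqrt (-2*(0:ℝ)/(1-2*0)) = 0 := by norm_num
    have h := hc.tendsto.mono_left (nhdsWithin_le_nhds (s := Set.Iio (0:ℝ)))
    rw [h0] at h
    exact h
  · filter_upwards [self_mem_nhdsWithin] with κ hκ
    exact ne_of_gt (Real.sqrt_pos.2 (hq_pos hκ))

lemma sqrt_two_sq : Real.sqrt 2 ^ 2 = 2 := Real.sq_sqrt (by norm_num)

lemma sqrt_half : Real.sqrt (1/2) = Real.sqrt 2 / 2 := by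
  rw [show (1/2 : ℝ) = (Real.sqrt 2 / 2)^2 by
    rw [div_pow, sqrt_two_sq]; norm_num]
  exact Real.sqrt_sq (by positivity)

lemma tendsto_w_zero :
    Tendsto w (nhdsWithin 0 (Set.Iio (0:ℝ))) (nhds (-Real.sqrt 2)) := by
  have h1 : Tendsto (fun κ : ℝ => (-4*κ - 1)/4) (nhdsWithin 0 (Set.Iio (0:ℝ)))
      (nhds (-1/4 : ℝ)) := by
    have hc : ContinuousAt (fun κ : ℝ => (-4*κ - 1)/4) 0 := by fun_prop
    have e : ((-4*(0:ℝ) - 1)/4) = -1/4 := by norm_num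
    rw [← e]
    exact hc.tendsto.mono_left nhdsWithin_le_nhds
  have h2 : Tendsto (fun κ : ℝ =>
      artanh (Real.sqrt (-2*κ/(1-2*κ))) / Real.sqrt (-2*κ/(1-2*κ)))
      (nhdsWithin 0 (Set.Iio (0:ℝ))) (nhds 1) := tendsto_artanh_div.comp tendsto_r_zero
  have h3 : Tendsto (fun κ : ℝ => Real.sqrt ((1-2*κ)/2)) (nhdsWithin 0 (Set.Iio (0:ℝ)))
      (nhds (Real.sqrt (1/2))) := by
    have hc : ContinuousAt (fun κ : ℝ => Real.sqrt ((1-2*κ)/2)) 0 := by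
      apply Real.continuous_sqrt.continuousAt.comp; fun_prop
    have e : Real.sqrt ((1-2*(0:ℝ))/2) = Real.sqrt (1/2) := by norm_num
    rw [← e]
    exact hc.tendsto.mono_left nhdsWithin_le_nhds
  have h4 : Tendsto (fun κ : ℝ => 1 / Real.sqrt ((1-2*κ)/2)) (nhdsWithin 0 (Set.Iio (0:ℝ)))
      (nhds (1 / Real.sqrt (1/2))) :=
    tendsto_const_nhds.div h3 (by rw [sqrt_half]; positivity)
  have hmain := ((h1.mul h2).mul h4).sub (h3.const_mul (3/2 : ℝ))
  have hval : (-1/4 : ℝ) * 1 * (1 / Real.sqrt (1/2)) - (3/2) * Real.sqrt (1/2)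
      = -Real.sqrt 2 := by
    rw [sqrt_half]
    have hs2 : Real.sqrt 2 > 0 := by positivity
    field_simp
    linarith [sqrt_two_sq]
  rw [hval] at hmain
  refine hmain.congr' ?_
  filter_upwards [self_mem_nhdsWithin] with κ (hκ : κ < 0)
  have hu' := hu hκ
  have hx0 : 0 < Real.sqrt (-κ) := Real.sqrt_pos.2 (by linarith)
  have hx2 : Real.sqrt (-κ)^2 = -κ := Real.sq_sqrt (by linarith)
  have hr0 : 0 < Real.sqrt (-2*κ/(1-2*κ)) := Real.sqrt_pos.2 (hq_pos hκ)
  have hr2 := hr2' hκ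
  have hS0 : 0 < Real.sqrt ((1-2*κ)/2) := Real.sqrt_pos.2 (by positivity)
  have hS2 : Real.sqrt ((1-2*κ)/2)^2 = (1-2*κ)/2 := Real.sq_sqrt (by positivity)
  have hrS : Real.sqrt (-2*κ/(1-2*κ)) * Real.sqrt ((1-2*κ)/2) = Real.sqrt (-κ) := by
    have h1' : (Real.sqrt (-2*κ/(1-2*κ)) * Real.sqrt ((1-2*κ)/2))^2 = Real.sqrt (-κ)^2 := by
      rw [mul_pow, hr2, hx2, hS2]; field_simp
    rw [← Real.sqrt_sq (by positivity :
        (0:ℝ) ≤ Real.sqrt (-2*κ/(1-2*κ)) * Real.sqrt ((1-2*κ)/2)),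
      ← Real.sqrt_sq (le_of_lt hx0), h1']
  show _ = w κ
  unfold w
  rw [← hrS]
  set r := Real.sqrt (-2*κ/(1-2*κ))
  set S := Real.sqrt ((1-2*κ)/2)
  field_simp

lemma tendsto_artanh_one : Tendsto artanh (nhdsWithin 1 (Set.Iio (1:ℝ))) atTop := by
  have h1 : Tendsto (fun y : ℝ => (1+y)/(1-y)) (nhdsWithin 1 (Set.Iio (1:ℝ))) atTop := by
    have hnum : Tendsto (fun y : ℝ => 1+y) (nhdsWithin 1 (Set.Iio (1:ℝ))) (nhds 2) := by
      have hc : ContinuousAt (fun y : ℝ => 1+y) 1 := by fun_prop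
      have := hc.tendsto.mono_left (nhdsWithin_le_nhds (s := Set.Iio (1:ℝ)))
      norm_num at this; exact this
    have hden : Tendsto (fun y : ℝ => (1-y)⁻¹) (nhdsWithin 1 (Set.Iio (1:ℝ))) atTop := by
      apply tendsto_inv_nhdsGT_zero.comp
      rw [tendsto_nhdsWithin_iff]
      constructor
      · have hc : ContinuousAt (fun y : ℝ => 1-y) 1 := by fun_prop
        have := hc.tendsto.mono_left (nhdsWithin_le_nhds (s := Set.Iio (1:ℝ)))
        norm_num at this; exact this
      · filter_upwards [self_mem_nhdsWithin] with y (hy : y < 1)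
        exact Set.mem_Ioi.2 (by linarith)
    have h := hnum.pos_mul_atTop (by norm_num : (0:ℝ) < 2) hden
    refine h.congr ?_
    intro y
    rw [div_eq_mul_inv]
  have h2 := (Real.tendsto_log_atTop.comp h1).const_mul_atTop (by norm_num : (0:ℝ) < 1/2)
  refine h2.congr ?_
  intro y
  simp [artanh, Function.comp]

set_option maxHeartbeats 1000000 in
lemma tendsto_r_atBot :
    Tendsto (fun κ : ℝ => Real.sqrt (-2*κ/(1-2*κ))) atBot (nhdsWithin 1 (Set.Iio (1:ℝ))) := by
  rw [tendsto_nhdsWithin_iff]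
  constructor
  · have hq1 : Tendsto (fun κ : ℝ => -2*κ/(1-2*κ)) atBot (nhds 1) := by
      have hinv : Tendsto (fun κ : ℝ => 1/(-κ)) atBot (nhds 0) := by
        have hneg : Tendsto (fun x:ℝ => -x) atBot atTop := tendsto_neg_atBot_atTop
        have := tendsto_inv_atTop_zero.comp hneg
        simpa [Function.comp_def, one_div] using this
      have h : Tendsto (fun κ : ℝ => 2/(1/(-κ) + 2)) atBot (nhds (2/((0:ℝ) + 2))) :=
        tendsto_const_nhds.div (hinv.add tendsto_const_nhds) (by norm_num)
      have h' : Tendsto (fun κ : ℝ => 2/(1/(-κ) + 2)) atBot (nhds 1) := by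
        norm_num at h
        refine h.congr fun κ => by ring
      refine h'.congr' ?_
      filter_upwards [eventually_lt_atBot (0:ℝ)] with κ hκ
      have h1 : -κ > 0 := by linarith
      have h2 : 1 - 2*κ > 0 := by linarith
      have h4 : 1/(-κ) + 2 > 0 := by positivity
      rw [div_eq_div_iff (ne_of_gt h4) (ne_of_gt h2)]
      have h5 : κ ≠ 0 := ne_of_lt hκ
      field_simp
      ring
    have := (Real.continuous_sqrt.continuousAt (x := 1)).tendsto.comp hq1
    simpa [Function.comp_def] using this
  · filter_upwards [eventually_lt_atBot (0:ℝ)] with κ hκ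
    exact hr_lt_one hκ

lemma tendsto_sqrt_atTop : Tendsto Real.sqrt atTop atTop := by
  apply tendsto_atTop_atTop_of_monotone (fun a b h => Real.sqrt_le_sqrt h)
  intro b
  refine ⟨(max b 0)^2, ?_⟩
  rw [Real.sqrt_sq (le_max_right _ _)]
  exact le_max_left _ _

lemma tendsto_w_atBot : Tendsto w atBot atTop := by
  have hT : Tendsto (fun κ : ℝ => artanh (Real.sqrt (-2*κ/(1-2*κ)))) atBot atTop :=
    tendsto_artanh_one.comp tendsto_r_atBot
  have hbound : ∀ᶠ κ in atBot, (1/4) * Real.sqrt (-κ) ≤ w κ := by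
    filter_upwards [eventually_le_atBot (-1 : ℝ), hT.eventually (eventually_ge_atTop (3:ℝ))]
      with κ h1 h3
    have hκ : κ < 0 := by linarith
    have hx0 : 0 < Real.sqrt (-κ) := Real.sqrt_pos.2 (by linarith)
    have hx2 : Real.sqrt (-κ)^2 = -κ := Real.sq_sqrt (by linarith)
    set x := Real.sqrt (-κ) with hxdef
    set T := artanh (Real.sqrt (-2*κ/(1-2*κ))) with hTdef
    have hA : (3/4)*x ≤ (-4*κ - 1)/(4*x) := by
      rw [le_div_iff₀ (by positivity)]
      nlinarith
    have hAT : ((3/4)*x) * 3 ≤ ((-4*κ - 1)/(4*x)) * T :=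
      mul_le_mul hA h3 (by norm_num) (le_trans (by positivity) hA)
    have hS : Real.sqrt ((1-2*κ)/2) ≤ (4/3)*x := by
      have h' : (1-2*κ)/2 ≤ ((4/3)*x)^2 := by nlinarith
      calc Real.sqrt ((1-2*κ)/2) ≤ Real.sqrt (((4/3)*x)^2) := Real.sqrt_le_sqrt h'
        _ = (4/3)*x := Real.sqrt_sq (by positivity)
    unfold w
    rw [← hxdef, ← hTdef]
    nlinarith
  have hs : Tendsto (fun κ : ℝ => (1/4) * Real.sqrt (-κ)) atBot atTop := by
    have hneg : Tendsto (fun x:ℝ => -x) atBot atTop := tendsto_neg_atBot_atTop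
    have := (tendsto_sqrt_atTop.comp hneg).const_mul_atTop
      (by norm_num : (0:ℝ) < 1/4)
    simpa [Function.comp] using this
  exact tendsto_atTop_mono' atBot hbound hs

/-- `w` is continuous on `(-∞,0)`, `w → +∞` at `-∞`,
`w → -√2` as `κ → 0⁻`, `w` is strictly decreasing on `(-∞,0)`, and `w` has a
unique zero `κ₀ ∈ (-∞,0)`. -/
theorem stmt_14 :
    ContinuousOn w (Set.Iio (0:ℝ)) ∧
    Tendsto w atBot atTop ∧
    Tendsto w (nhdsWithin 0 (Set.Iio (0:ℝ))) (nhds (-Real.sqrt 2)) ∧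
    StrictAntiOn w (Set.Iio (0:ℝ)) ∧
    ∃! κ₀ : ℝ, κ₀ ∈ Set.Iio (0:ℝ) ∧ w κ₀ = 0 := by
  refine ⟨continuousOn_w, tendsto_w_atBot, tendsto_w_zero, strictAntiOn_w, ?_⟩
  have hneg : -Real.sqrt 2 < 0 := by
    have : (0:ℝ) < Real.sqrt 2 := by positivity
    linarith
  have hNB : (nhdsWithin (0:ℝ) (Set.Iio (0:ℝ))).NeBot := nhdsLT_neBot (0:ℝ)
  obtain ⟨b, hwb, hb⟩ :=
    ((tendsto_w_zero.eventually_lt_const hneg).and self_mem_nhdsWithin).exists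
  have hb' : b < 0 := hb
  obtain ⟨a, ha1, hab⟩ :=
    ((tendsto_w_atBot.eventually (eventually_ge_atTop (1:ℝ))).and (eventually_lt_atBot b)).exists
  have hsub : Set.Icc a b ⊆ Set.Iio (0:ℝ) := fun t ht => lt_of_le_of_lt ht.2 hb'
  have hcont : ContinuousOn w (Set.Icc a b) := continuousOn_w.mono hsub
  have h0mem : (0:ℝ) ∈ Set.Icc (w b) (w a) := ⟨le_of_lt hwb, by linarith⟩
  obtain ⟨κ₀, hκ₀mem, hκ₀⟩ := intermediate_value_Icc' (le_of_lt hab) hcont h0mem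
  refine ⟨κ₀, ⟨hsub hκ₀mem, hκ₀⟩, ?_⟩
  rintro y ⟨hy0, hy⟩
  exact strictAntiOn_w.injOn hy0 (hsub hκ₀mem) (by rw [hy, hκ₀])
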